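/- Let A be a symmetric (n+1)×(n+1) matrix satisfying A𝟏 = 0 and Ax = e_R − e_L. Define Z as the matrix acting by Z = [[1, 𝟏⃗ᵀ, 1],[0, Ī, 0],[0, x⃗ᵀ, 1]] in the block decomposition (first row, interior, last row), where 𝟏⃗ and x⃗ are the interior parts of 𝟏 and x. Then Z is invertible and Z A Zᵀ = diag(0, Ā, 1), the block diagonal matrix with top-left scalar 0, central block Ā and bottom-right scalar 1. -/

import Mathlib

open Matrix

noncomputable section

def onesVec (n : ℕ) : Fin (n+1) → ℝ := fun _ => 1

def gridVec (n : ℕ) : Fin (n+1) → ℝ := fun i => (i : ℝ) / n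

def eL (n : ℕ) : Fin (n+1) → ℝ := fun i => if i.1 = 0 then 1 else 0

def eR (n : ℕ) : Fin (n+1) → ℝ := fun i => if i.1 = n then 1 else 0

def interiorEmb (n : ℕ) : Fin (n-1) → Fin (n+1) :=
  fun i => ⟨i.1 + 1, by have := i.isLt; omega⟩

def centralBlock (n : ℕ) (A : Matrix (Fin (n+1)) (Fin (n+1)) ℝ) :
    Matrix (Fin (n-1)) (Fin (n-1)) ℝ :=
  A.submatrix (interiorEmb n) (interiorEmb n)

def pad (n : ℕ) (B : Matrix (Fin (n-1)) (Fin (n-1)) ℝ) :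
    Matrix (Fin (n+1)) (Fin (n+1)) ℝ :=
  fun i j =>
    if hi : 0 < i.1 ∧ i.1 < n then
      if hj : 0 < j.1 ∧ j.1 < n then
        B ⟨i.1 - 1, by omega⟩ ⟨j.1 - 1, by omega⟩
      else 0
    else 0

def G2 (n : ℕ) (A : Matrix (Fin (n+1)) (Fin (n+1)) ℝ) :
    Matrix (Fin (n+1)) (Fin (n+1)) ℝ :=
  pad n (centralBlock n A)⁻¹

def Aplus (n : ℕ) (A : Matrix (Fin (n+1)) (Fin (n+1)) ℝ) :
    Matrix (Fin (n+1)) (Fin (n+1)) ℝ :=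
  (1 - ((n : ℝ) + 1)⁻¹ • vecMulVec (onesVec n) (onesVec n)) * G2 n A *
      (1 - ((n : ℝ) + 1)⁻¹ • vecMulVec (onesVec n) (onesVec n)) +
    vecMulVec (gridVec n - (1/2 : ℝ) • onesVec n)
      (gridVec n - (1/2 : ℝ) • onesVec n)

def Zmat (n : ℕ) : Matrix (Fin (n+1)) (Fin (n+1)) ℝ :=
  fun i j =>
    if i.1 = 0 then 1
    else if i.1 = n then gridVec n j
    else if i = j then 1 else 0

theorem congruence_diag
    (n : ℕ) (hn : 2 ≤ n) (A : Matrix (Fin (n+1)) (Fin (n+1)) ℝ)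
    (hsym : A.IsSymm)
    (h1 : A *ᵥ onesVec n = 0)
    (hx : A *ᵥ gridVec n = eR n - eL n) :
    IsUnit (Zmat n).det ∧
    Zmat n * A * (Zmat n)ᵀ = pad n (centralBlock n A) + vecMulVec (eR n) (eR n) := by
  have hnR : (n : ℝ) ≠ 0 := Nat.cast_ne_zero.mpr (by omega)
  have hnn : ¬ n = 0 := by omega
  have hsym' : ∀ i j, A i j = A j i := fun i j => congrFun (congrFun hsym j) i
  have hA1 : ∀ j, ∑ l, A j l = 0 := by
    intro j
    have h := congrFun h1 j
    simpa [Matrix.mulVec, dotProduct, onesVec] using h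
  have hAx : ∀ j, ∑ l, A j l * gridVec n l
      = (if j.1 = n then (1:ℝ) else 0) - (if j.1 = 0 then (1:ℝ) else 0) := by
    intro j
    have h := congrFun hx j
    simpa [Matrix.mulVec, dotProduct, eR, eL] using h
  have hA1' : ∀ j, ∑ l, A l j = 0 := by
    intro j
    rw [Finset.sum_congr rfl fun l _ => hsym' l j]
    exact hA1 j
  have hAx' : ∀ j, ∑ l, gridVec n l * A l j
      = (if j.1 = n then (1:ℝ) else 0) - (if j.1 = 0 then (1:ℝ) else 0) := by
    intro j
    rw [Finset.sum_congr rfl fun l _ => by rw [mul_comm, hsym' l j]]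
    exact hAx j
  have hgrid0 : gridVec n (0 : Fin (n+1)) = 0 := by simp [gridVec]
  have hgridlast : gridVec n (Fin.last n) = 1 := by
    simp [gridVec, Fin.val_last, div_self hnR]
  have hZ0 : ∀ (k : Fin (n+1)), k.1 = 0 → ∀ m, Zmat n k m = 1 := by
    intro k hk m; simp [Zmat, hk]
  have hZn : ∀ (k : Fin (n+1)), ¬ k.1 = 0 → k.1 = n → ∀ m, Zmat n k m = gridVec n m := by
    intro k hk0 hkn m; simp [Zmat, hk0, hkn, hnn]
  have hZi : ∀ (k : Fin (n+1)), ¬ k.1 = 0 → ¬ k.1 = n →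
      ∀ m, Zmat n k m = if k = m then 1 else 0 := by
    intro k hk0 hkn m; simp [Zmat, hk0, hkn]
  constructor
  · -- invertibility: explicit right inverse
    set c0 : Fin (n+1) → ℝ := fun j =>
      if j.1 = 0 then 1 else if j.1 = n then -1 else gridVec n j - 1 with hc0
    set cn : Fin (n+1) → ℝ := fun j =>
      if j.1 = 0 then 0 else if j.1 = n then 1 else -(gridVec n j) with hcn
    set W : Matrix (Fin (n+1)) (Fin (n+1)) ℝ := fun i j =>
      (if (0 : Fin (n+1)) = i then c0 j else 0) +
      (if Fin.last n = i then cn j else 0) +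
      (if ¬ j.1 = 0 ∧ ¬ j.1 = n ∧ i = j then 1 else 0) with hW
    have hWsum : ∀ j, ∑ l, W l j
        = c0 j + cn j + (if ¬ j.1 = 0 ∧ ¬ j.1 = n then 1 else 0) := by
      intro j
      rw [hW]
      by_cases hP : ¬ j.1 = 0 ∧ ¬ j.1 = n
      · simp [Finset.sum_add_distrib, hP.1, hP.2, Finset.sum_ite_eq, Finset.sum_ite_eq']
      · simp only [Finset.sum_add_distrib]
        rw [if_neg hP]
        have h3 : ∀ l : Fin (n+1), (if ¬ j.1 = 0 ∧ ¬ j.1 = n ∧ l = j then (1:ℝ) else 0) = 0 := by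
          intro l
          rw [if_neg]
          rintro ⟨a, b, -⟩
          exact hP ⟨a, b⟩
        simp [h3, Finset.sum_ite_eq, -Fin.val_eq_zero_iff]
    have hWsumx : ∀ j, ∑ l, gridVec n l * W l j
        = cn j + (if ¬ j.1 = 0 ∧ ¬ j.1 = n then gridVec n j else 0) := by
      intro j
      rw [hW]
      by_cases hP : ¬ j.1 = 0 ∧ ¬ j.1 = n
      · simp [mul_add, Finset.sum_add_distrib, hP.1, hP.2, Finset.sum_ite_eq,
          Finset.sum_ite_eq', mul_ite, mul_zero, mul_one, hgrid0, hgridlast, zero_mul, one_mul]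
      · simp only [mul_add, Finset.sum_add_distrib]
        rw [if_neg hP]
        have h3 : ∀ l : Fin (n+1),
            gridVec n l * (if ¬ j.1 = 0 ∧ ¬ j.1 = n ∧ l = j then (1:ℝ) else 0) = 0 := by
          intro l
          rw [if_neg, mul_zero]
          rintro ⟨a, b, -⟩
          exact hP ⟨a, b⟩
        simp [h3, mul_ite, mul_zero, Finset.sum_ite_eq, hgrid0, hgridlast, -Fin.val_eq_zero_iff]
    have hZW : Zmat n * W = 1 := by
      ext k j
      rw [Matrix.mul_apply, Matrix.one_apply]
      by_cases hk0 : k.1 = 0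
      · rw [Finset.sum_congr rfl fun l _ => by rw [hZ0 k hk0 l, one_mul]]
        rw [hWsum j]
        by_cases hj0 : j.1 = 0
        · have hkj : k = j := Fin.ext (by omega)
          have hP : ¬ (¬ j.1 = 0 ∧ ¬ j.1 = n) := fun h => h.1 hj0
          simp [hc0, hcn, hj0, hkj, hP, -Fin.val_eq_zero_iff]
        · have hkj : ¬ k = j := fun h => hj0 (by rw [← h]; exact hk0)
          by_cases hjn : j.1 = n
          · have hP : ¬ (¬ j.1 = 0 ∧ ¬ j.1 = n) := fun h => h.2 hjn
            simp [hc0, hcn, hj0, hjn, hkj, hP, hnn, -Fin.val_eq_zero_iff]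
          · simp only [hc0, hcn]
            rw [if_neg hj0, if_neg hjn, if_neg hj0, if_neg hjn,
              if_pos (⟨hj0, hjn⟩ : ¬ j.1 = 0 ∧ ¬ j.1 = n), if_neg hkj]
            ring
      · by_cases hkn : k.1 = n
        · rw [Finset.sum_congr rfl fun l _ => by rw [hZn k hk0 hkn l]]
          rw [hWsumx j]
          by_cases hj0 : j.1 = 0
          · have hkj : ¬ k = j := fun h => by rw [h] at hkn; omega
            have hP : ¬ (¬ j.1 = 0 ∧ ¬ j.1 = n) := fun h => h.1 hj0
            simp [hcn, hj0, hP, hkj, -Fin.val_eq_zero_iff]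
          · by_cases hjn : j.1 = n
            · have hkj : k = j := Fin.ext (by omega)
              have hP : ¬ (¬ j.1 = 0 ∧ ¬ j.1 = n) := fun h => h.2 hjn
              simp [hcn, hj0, hjn, hP, hkj, hnn, -Fin.val_eq_zero_iff]
            · have hkj : ¬ k = j := fun h => by rw [h] at hkn; exact hjn hkn
              simp only [hcn]
              rw [if_neg hj0, if_neg hjn,
                if_pos (⟨hj0, hjn⟩ : ¬ j.1 = 0 ∧ ¬ j.1 = n), if_neg hkj]
              ring
        · rw [Finset.sum_congr rfl fun l _ => by
            rw [hZi k hk0 hkn l, ite_mul, one_mul, zero_mul]]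
          rw [Finset.sum_ite_eq]
          simp only [Finset.mem_univ, if_true]
          simp only [hW]
          have h0k : ¬ (0 : Fin (n+1)) = k := fun h => hk0 (by rw [← h]; rfl)
          have hlk : ¬ Fin.last n = k := fun h => hkn (by rw [← h]; rfl)
          by_cases hkj : k = j
          · have hkey : ¬ j.1 = 0 ∧ ¬ j.1 = n ∧ k = j :=
              ⟨by rw [← hkj]; exact hk0, by rw [← hkj]; exact hkn, hkj⟩
            rw [if_neg h0k, if_neg hlk, if_pos hkey, if_pos hkj]
            ring
          · rw [if_neg h0k, if_neg hlk, if_neg (fun h => hkj h.2.2), if_neg hkj]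
            ring
    exact Matrix.isUnit_det_of_right_inverse hZW
  · -- the congruence identity
    have hZA : ∀ k l, (Zmat n * A) k l =
        if k.1 = 0 then 0
        else if k.1 = n then
          ((if l.1 = n then (1:ℝ) else 0) - (if l.1 = 0 then (1:ℝ) else 0))
        else A k l := by
      intro k l
      rw [Matrix.mul_apply]
      by_cases hk0 : k.1 = 0
      · rw [if_pos hk0,
          Finset.sum_congr rfl fun m _ => by rw [hZ0 k hk0 m, one_mul]]
        exact hA1' l
      · rw [if_neg hk0]
        by_cases hkn : k.1 = n
        · rw [if_pos hkn,
            Finset.sum_congr rfl fun m _ => by rw [hZn k hk0 hkn m]]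
          exact hAx' l
        · rw [if_neg hkn,
            Finset.sum_congr rfl fun m _ => by
              rw [hZi k hk0 hkn m, ite_mul, one_mul, zero_mul]]
          rw [Finset.sum_ite_eq]
          exact if_pos (Finset.mem_univ k)
    ext k j
    have hLHS : (Zmat n * A * (Zmat n)ᵀ) k j =
        ∑ l, (if k.1 = 0 then 0
          else if k.1 = n then
            ((if l.1 = n then (1:ℝ) else 0) - (if l.1 = 0 then (1:ℝ) else 0))
          else A k l) * Zmat n j l := by
      rw [Matrix.mul_apply]
      exact Finset.sum_congr rfl fun l _ => by rw [hZA, Matrix.transpose_apply]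
    rw [hLHS, Matrix.add_apply, Matrix.vecMulVec_apply]
    by_cases hk0 : k.1 = 0
    · rw [Finset.sum_congr rfl fun l _ => by rw [if_pos hk0, zero_mul],
        Finset.sum_const_zero]
      have h1 : pad n (centralBlock n A) k j = 0 := by
        rw [pad, dif_neg (by omega)]
      have h2 : eR n k = 0 := by
        show (if k.1 = n then (1:ℝ) else 0) = 0
        rw [if_neg (by omega)]
      rw [h1, h2, zero_mul, add_zero]
    · rw [Finset.sum_congr rfl fun l _ => by rw [if_neg hk0]]
      by_cases hkn : k.1 = n
      · rw [Finset.sum_congr rfl fun l _ => by rw [if_pos hkn]]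
        have hcol : ∀ (f : Fin (n+1) → ℝ),
            ∑ l, ((if l.1 = n then (1:ℝ) else 0) - (if l.1 = 0 then (1:ℝ) else 0)) * f l
              = f (Fin.last n) - f 0 := by
          intro f
          have he : ∀ l : Fin (n+1),
              ((if l.1 = n then (1:ℝ) else 0) - (if l.1 = 0 then (1:ℝ) else 0)) * f l
              = (if Fin.last n = l then f l else 0)
                - (if (0 : Fin (n+1)) = l then f l else 0) := by
            intro l
            by_cases h1 : l.1 = n
            · have hl : Fin.last n = l := Fin.ext (by simp [h1])
              have h2 : ¬ l.1 = 0 := by omega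
              have h0l : ¬ (0 : Fin (n+1)) = l := fun c => h2 (by rw [← c]; rfl)
              rw [if_pos h1, if_neg h2, if_pos hl, if_neg h0l]
              ring
            · have hll : ¬ Fin.last n = l := fun c => h1 (by rw [← c]; rfl)
              rw [if_neg h1, if_neg hll]
              by_cases h2 : l.1 = 0
              · have h0l : (0 : Fin (n+1)) = l := Fin.ext (by simp [h2])
                rw [if_pos h2, if_pos h0l]
                ring
              · have h0l : ¬ (0 : Fin (n+1)) = l := fun c => h2 (by rw [← c]; rfl)
                rw [if_neg h2, if_neg h0l]
                ring
          rw [Finset.sum_congr rfl fun l _ => he l, Finset.sum_sub_distrib]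
          simp [Finset.sum_ite_eq]
        rw [hcol (fun l => Zmat n j l)]
        have hpad : pad n (centralBlock n A) k j = 0 := by
          rw [pad, dif_neg (by omega)]
        rw [hpad, zero_add]
        have heRk : eR n k = 1 := by
          show (if k.1 = n then (1:ℝ) else 0) = 1
          rw [if_pos hkn]
        rw [heRk, one_mul]
        by_cases hj0 : j.1 = 0
        · rw [hZ0 j hj0, hZ0 j hj0]
          have : eR n j = 0 := by
            show (if j.1 = n then (1:ℝ) else 0) = 0
            rw [if_neg (by omega)]
          rw [this]; ring
        · by_cases hjn : j.1 = n
          · rw [hZn j hj0 hjn, hZn j hj0 hjn, hgrid0, hgridlast]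
            have : eR n j = 1 := by
              show (if j.1 = n then (1:ℝ) else 0) = 1
              rw [if_pos hjn]
            rw [this]; ring
          · rw [hZi j hj0 hjn, hZi j hj0 hjn]
            rw [if_neg (fun c : j = Fin.last n => hjn (by rw [c]; rfl)),
              if_neg (fun c : j = 0 => hj0 (by rw [c]; rfl))]
            have : eR n j = 0 := by
              show (if j.1 = n then (1:ℝ) else 0) = 0
              rw [if_neg hjn]
            rw [this]; ring
      · rw [Finset.sum_congr rfl fun l _ => by rw [if_neg hkn]]
        have heRk : eR n k = 0 := by
          show (if k.1 = n then (1:ℝ) else 0) = 0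
          rw [if_neg hkn]
        rw [heRk, zero_mul, add_zero]
        by_cases hj0 : j.1 = 0
        · rw [Finset.sum_congr rfl fun l _ => by rw [hZ0 j hj0 l, mul_one]]
          rw [hA1 k, pad]
          have hk' := k.isLt
          rw [dif_pos (by omega), dif_neg (by omega)]
        · by_cases hjn : j.1 = n
          · rw [Finset.sum_congr rfl fun l _ => by rw [hZn j hj0 hjn l]]
            rw [hAx k, if_neg hkn, if_neg hk0, pad]
            have hk' := k.isLt
            rw [dif_pos (by omega), dif_neg (by omega)]
            ring
          · rw [Finset.sum_congr rfl fun l _ => by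
              rw [hZi j hj0 hjn l, mul_ite, mul_one, mul_zero]]
            rw [Finset.sum_ite_eq]
            simp only [Finset.mem_univ, if_true]
            have hk' := k.isLt
            have hj' := j.isLt
            rw [pad, dif_pos (by omega), dif_pos (by omega)]
            rw [centralBlock, Matrix.submatrix_apply]
            congr 1 <;> · rw [interiorEmb]; exact Fin.ext (by simp; omega)
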